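/- Let M = [a,b) and N = [c,d) be interval modules (0 ≤ a < b, 0 ≤ c < d). Then the interleaving distance D(M,N) = inf{ε > 0 : there exists an ε-interleaving between M and N} equals min{m₁, m₂} = min{ max{|a−c|,|b−d|}, max{(b−a)/2,(d−c)/2} }. -/

import Mathlib

open scoped NNReal

/-- A persistence module: a functor from `[0,∞)` to real vector spaces. -/
structure PM where
  V : ℝ≥0 → Type
  [grp : ∀ x, AddCommGroup (V x)]
  [mod : ∀ x, Module ℝ (V x)]
  map : ∀ {x y : ℝ≥0}, x ≤ y → (V x →ₗ[ℝ] V y)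
  map_id : ∀ x : ℝ≥0, map (le_refl x) = LinearMap.id
  map_comp : ∀ {x y z : ℝ≥0} (h1 : x ≤ y) (h2 : y ≤ z),
    (map h2).comp (map h1) = map (h1.trans h2)

attribute [instance] PM.grp PM.mod

/-- A morphism of persistence modules. -/
structure PM.Hom (M N : PM) where
  app : ∀ x : ℝ≥0, M.V x →ₗ[ℝ] N.V x
  comm : ∀ {x y : ℝ≥0} (h : x ≤ y), (app y).comp (M.map h) = (N.map h).comp (app x)

/-- The shifted module `M·ε`. -/
def PM.shift (M : PM) (ε : ℝ≥0) : PM where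
  V x := M.V (x + ε)
  grp x := inferInstance
  mod x := inferInstance
  map h := M.map (add_le_add_left h ε)
  map_id x := M.map_id (x + ε)
  map_comp h1 h2 := M.map_comp _ _

noncomputable def intervalSub (α β : ℝ) (x : ℝ≥0) : Submodule ℝ ℝ :=
  if α ≤ (x : ℝ) ∧ (x : ℝ) < β then ⊤ else ⊥

/-- The interval module `[α,β)`. -/
noncomputable def intervalModule (α β : ℝ) : PM where
  V x := ↥(intervalSub α β x)
  grp x := inferInstance
  mod x := inferInstance
  map {x y} h := LinearMap.codRestrict _
      ((if α ≤ (x : ℝ) ∧ (y : ℝ) < β then (1 : ℝ) else 0) • (intervalSub α β x).subtype)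
      (by
        intro v
        by_cases hy : α ≤ (y : ℝ) ∧ (y : ℝ) < β
        · simp [intervalSub, hy]
        · have hc : ¬(α ≤ (x : ℝ) ∧ (y : ℝ) < β) := by
            intro hc
            exact hy ⟨le_trans hc.1 (by exact_mod_cast h), hc.2⟩
          rw [if_neg hc, zero_smul, LinearMap.zero_apply]; exact Submodule.zero_mem _)
  map_id x := by
    ext v
    by_cases hx : α ≤ (x : ℝ) ∧ (x : ℝ) < β
    · simp [hx]
    · have hv : (v : ℝ) = 0 := by
        have h2 := v.2
        simp only [intervalSub, if_neg hx, Submodule.mem_bot] at h2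
        exact h2
      simp [hx, hv]
  map_comp {x y z} h1 h2 := by
    ext v
    by_cases hC : α ≤ (x : ℝ) ∧ (z : ℝ) < β
    · have hA : α ≤ (x : ℝ) ∧ (y : ℝ) < β :=
        ⟨hC.1, lt_of_le_of_lt (by exact_mod_cast h2) hC.2⟩
      have hB : α ≤ (y : ℝ) ∧ (z : ℝ) < β :=
        ⟨le_trans hC.1 (by exact_mod_cast h1), hC.2⟩
      simp [hA, hB, hC]
    · rcases not_and_or.mp hC with hx | hz
      · have hA : ¬(α ≤ (x : ℝ) ∧ (y : ℝ) < β) := fun h => hx h.1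
        simp [hA, hC]
        split_ifs <;> simp
      · have hB : ¬(α ≤ (y : ℝ) ∧ (z : ℝ) < β) := fun h => hz h.2
        simp [hB, hC]

/-- `Hom(M,N) ≠ {0}`: there is a nonzero morphism from `M` to `N`. -/
def HomNeZero (M N : PM) : Prop := ∃ F : PM.Hom M N, ∃ x, F.app x ≠ 0

/-- `S_{M,N} = {x ≥ 0 : Hom(M, N·x) ≠ {0}}`. -/
noncomputable def Sset (M N : PM) : Set ℝ :=
  {x : ℝ | 0 ≤ x ∧ HomNeZero M (N.shift x.toNNReal)}

/-- The canonical morphism `Π_M^{M·τ} : M → M·τ`. -/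
def PM.pi (M : PM) (τ : ℝ≥0) : M.Hom (M.shift τ) where
  app x := M.map le_self_add
  comm {x y} h := by
    show (M.map le_self_add).comp (M.map h) =
      (M.map (add_le_add_left h τ)).comp (M.map le_self_add)
    rw [M.map_comp, M.map_comp]

/-- The pair `(Φ, Ψ)` is an `ε`-interleaving between `M` and `N`:
`(Ψ·ε) ∘ Φ = Π_M^{M·2ε}` and `(Φ·ε) ∘ Ψ = Π_N^{N·2ε}` (expressed pointwise). -/
def IsInterleaving (M N : PM) (ε : ℝ≥0)
    (Φ : M.Hom (N.shift ε)) (Ψ : N.Hom (M.shift ε)) : Prop :=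
  (∀ x : ℝ≥0, (Ψ.app (x + ε)).comp (Φ.app x) =
      M.map (le_self_add.trans le_self_add : x ≤ x + ε + ε)) ∧
  (∀ x : ℝ≥0, (Φ.app (x + ε)).comp (Ψ.app x) =
      N.map (le_self_add.trans le_self_add : x ≤ x + ε + ε))

lemma im_coe_zero {α β : ℝ} {x : ℝ≥0} (hx : ¬(α ≤ (x:ℝ) ∧ (x:ℝ) < β))
    (v : ↥(intervalSub α β x)) : (v:ℝ) = 0 := by
  have h2 := v.2
  simpa [intervalSub, hx] using h2

lemma im_map_coe (α β : ℝ) {x y : ℝ≥0} (h : x ≤ y) (v : ↥(intervalSub α β x)) :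
    ((show ↥(intervalSub α β y) from ((intervalModule α β).map h) v) : ℝ)
      = (if α ≤ (x:ℝ) ∧ (y:ℝ) < β then (1:ℝ) else 0) * (v:ℝ) := rfl
/-- Scalar morphism from `[a,b)` to the shift of `[c,d)` by `ε`. -/
noncomputable def sHom (a b c d : ℝ) (ε : ℝ≥0) (h1 : c ≤ a + ε) (h2 : d ≤ b + ε) :
    PM.Hom (intervalModule a b) ((intervalModule c d).shift ε) where
  app x := LinearMap.codRestrict (intervalSub c d (x + ε))
    ((if a ≤ (x:ℝ) ∧ ((x:ℝ) + (ε:ℝ)) < d then (1:ℝ) else 0) • (intervalSub a b x).subtype)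
    (by
      intro v
      by_cases ht : c ≤ ((x:ℝ) + (ε:ℝ)) ∧ ((x:ℝ) + (ε:ℝ)) < d
      · have hT : intervalSub c d (x + ε) = ⊤ := by
          rw [intervalSub, if_pos (by push_cast; exact ht)]
        rw [hT]; exact Submodule.mem_top
      · by_cases hs : a ≤ (x:ℝ) ∧ ((x:ℝ) + (ε:ℝ)) < d
        · exact absurd ⟨by linarith [hs.1], hs.2⟩ ht
        · rw [if_neg hs, zero_smul]; exact Submodule.zero_mem _)
  comm {x y} h := by
    refine LinearMap.ext fun (v : ↥(intervalSub a b x)) => ?_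
    apply Subtype.ext
    have hxy : (x:ℝ) ≤ (y:ℝ) := by exact_mod_cast h
    show (if a ≤ (y:ℝ) ∧ ((y:ℝ) + (ε:ℝ)) < d then (1:ℝ) else 0) *
        ((if a ≤ (x:ℝ) ∧ (y:ℝ) < b then (1:ℝ) else 0) * (v:ℝ))
      = (if c ≤ ((x + ε : ℝ≥0):ℝ) ∧ ((y + ε : ℝ≥0):ℝ) < d then (1:ℝ) else 0) *
        ((if a ≤ (x:ℝ) ∧ ((x:ℝ) + (ε:ℝ)) < d then (1:ℝ) else 0) * (v:ℝ))
    rw [show ((x + ε : ℝ≥0):ℝ) = (x:ℝ) + (ε:ℝ) by push_cast; ring,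
      show ((y + ε : ℝ≥0):ℝ) = (y:ℝ) + (ε:ℝ) by push_cast; ring]
    by_cases hv : a ≤ (x:ℝ) ∧ (x:ℝ) < b
    · by_cases hyd : (y:ℝ) + (ε:ℝ) < d
      · rw [if_pos ⟨le_trans hv.1 hxy, hyd⟩, if_pos ⟨hv.1, by linarith⟩,
          if_pos ⟨by linarith [hv.1], hyd⟩, if_pos ⟨hv.1, by linarith⟩]
      · have e1 : (if a ≤ (y:ℝ) ∧ (y:ℝ) + (ε:ℝ) < d then (1:ℝ) else 0) = 0 :=
          if_neg (fun hp => hyd hp.2)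
        have e2 : (if c ≤ (x:ℝ) + (ε:ℝ) ∧ (y:ℝ) + (ε:ℝ) < d then (1:ℝ) else 0) = 0 :=
          if_neg (fun hp => hyd hp.2)
        rw [e1, e2]; ring
    · rw [im_coe_zero hv v]; ring
/-- The zero morphism into a shift. -/
def zHom (M N : PM) (ε : ℝ≥0) : PM.Hom M (N.shift ε) where
  app _ := 0
  comm _ := by ext v; simp

lemma interleave_zero (a b c d : ℝ) (ε : ℝ≥0) (hba : b - a ≤ 2*(ε:ℝ)) (hdc : d - c ≤ 2*(ε:ℝ)) :
    IsInterleaving (intervalModule a b) (intervalModule c d) ε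
      (zHom _ _ ε) (zHom _ _ ε) := by
  constructor
  · intro x
    refine LinearMap.ext fun (v : ↥(intervalSub a b x)) => ?_
    apply Subtype.ext
    show (0:ℝ) = (if a ≤ (x:ℝ) ∧ ((x+ε+ε:ℝ≥0):ℝ) < b then (1:ℝ) else 0) * (v:ℝ)
    rw [show ((x+ε+ε:ℝ≥0):ℝ) = (x:ℝ)+(ε:ℝ)+(ε:ℝ) by push_cast; ring]
    rw [if_neg (fun hp => by linarith [hp.1, hp.2])]; ring
  · intro x
    refine LinearMap.ext fun (v : ↥(intervalSub c d x)) => ?_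
    apply Subtype.ext
    show (0:ℝ) = (if c ≤ (x:ℝ) ∧ ((x+ε+ε:ℝ≥0):ℝ) < d then (1:ℝ) else 0) * (v:ℝ)
    rw [show ((x+ε+ε:ℝ≥0):ℝ) = (x:ℝ)+(ε:ℝ)+(ε:ℝ) by push_cast; ring]
    rw [if_neg (fun hp => by linarith [hp.1, hp.2])]; ring

lemma interleave_scalar (a b c d : ℝ) (ε : ℝ≥0) (h1 : c ≤ a + ε) (h2 : d ≤ b + ε)
    (h3 : a ≤ c + ε) (h4 : b ≤ d + ε) :
    IsInterleaving (intervalModule a b) (intervalModule c d) ε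
      (sHom a b c d ε h1 h2) (sHom c d a b ε h3 h4) := by
  constructor
  · intro x
    refine LinearMap.ext fun (v : ↥(intervalSub a b x)) => ?_
    apply Subtype.ext
    show (if c ≤ ((x+ε:ℝ≥0):ℝ) ∧ (((x+ε:ℝ≥0):ℝ) + (ε:ℝ)) < b then (1:ℝ) else 0) *
        ((if a ≤ (x:ℝ) ∧ ((x:ℝ) + (ε:ℝ)) < d then (1:ℝ) else 0) * (v:ℝ))
      = (if a ≤ (x:ℝ) ∧ ((x+ε+ε:ℝ≥0):ℝ) < b then (1:ℝ) else 0) * (v:ℝ)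
    rw [show ((x+ε:ℝ≥0):ℝ) = (x:ℝ)+(ε:ℝ) by push_cast; ring,
      show ((x+ε+ε:ℝ≥0):ℝ) = (x:ℝ)+(ε:ℝ)+(ε:ℝ) by push_cast; ring]
    by_cases hv : a ≤ (x:ℝ) ∧ (x:ℝ) < b
    · by_cases hb : (x:ℝ)+(ε:ℝ)+(ε:ℝ) < b
      · rw [if_pos ⟨by linarith [hv.1], hb⟩, if_pos ⟨hv.1, by linarith⟩, if_pos ⟨hv.1, hb⟩]
        ring
      · have e1 : (if c ≤ (x:ℝ)+(ε:ℝ) ∧ (x:ℝ)+(ε:ℝ)+(ε:ℝ) < b then (1:ℝ) else 0) = 0 :=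
          if_neg fun hp => hb hp.2
        have e2 : (if a ≤ (x:ℝ) ∧ (x:ℝ)+(ε:ℝ)+(ε:ℝ) < b then (1:ℝ) else 0) = 0 :=
          if_neg fun hp => hb hp.2
        rw [e1, e2]; ring
    · rw [im_coe_zero hv v]; ring
  · intro x
    refine LinearMap.ext fun (v : ↥(intervalSub c d x)) => ?_
    apply Subtype.ext
    show (if a ≤ ((x+ε:ℝ≥0):ℝ) ∧ (((x+ε:ℝ≥0):ℝ) + (ε:ℝ)) < d then (1:ℝ) else 0) *
        ((if c ≤ (x:ℝ) ∧ ((x:ℝ) + (ε:ℝ)) < b then (1:ℝ) else 0) * (v:ℝ))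
      = (if c ≤ (x:ℝ) ∧ ((x+ε+ε:ℝ≥0):ℝ) < d then (1:ℝ) else 0) * (v:ℝ)
    rw [show ((x+ε:ℝ≥0):ℝ) = (x:ℝ)+(ε:ℝ) by push_cast; ring,
      show ((x+ε+ε:ℝ≥0):ℝ) = (x:ℝ)+(ε:ℝ)+(ε:ℝ) by push_cast; ring]
    by_cases hv : c ≤ (x:ℝ) ∧ (x:ℝ) < d
    · by_cases hb : (x:ℝ)+(ε:ℝ)+(ε:ℝ) < d
      · rw [if_pos ⟨by linarith [hv.1], hb⟩, if_pos ⟨hv.1, by linarith⟩, if_pos ⟨hv.1, hb⟩]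
        ring
      · have e1 : (if a ≤ (x:ℝ)+(ε:ℝ) ∧ (x:ℝ)+(ε:ℝ)+(ε:ℝ) < d then (1:ℝ) else 0) = 0 :=
          if_neg fun hp => hb hp.2
        have e2 : (if c ≤ (x:ℝ) ∧ (x:ℝ)+(ε:ℝ)+(ε:ℝ) < d then (1:ℝ) else 0) = 0 :=
          if_neg fun hp => hb hp.2
        rw [e1, e2]; ring
    · rw [im_coe_zero hv v]; ring

lemma lower_aux {a b c d ε : ℝ} (hε : 0 < ε) {Φ Ψ}
    (hI : IsInterleaving (intervalModule a b) (intervalModule c d) ε.toNNReal Φ Ψ)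
    {x : ℝ} (hx0 : 0 ≤ x) (hax : a ≤ x) (hxb : x + 2*ε < b) :
    c ≤ x + ε ∧ x + ε < d := by
  have hE : ((ε.toNNReal : ℝ≥0):ℝ) = ε := Real.coe_toNNReal ε hε.le
  let X : ℝ≥0 := ⟨x, hx0⟩
  have hXx : ((X : ℝ≥0):ℝ) = x := rfl
  have hmem : (1:ℝ) ∈ intervalSub a b X := by
    rw [intervalSub, if_pos (⟨hax, by linarith⟩ : a ≤ ((X:ℝ≥0):ℝ) ∧ ((X:ℝ≥0):ℝ) < b)]
    trivial
  let v : ↥(intervalSub a b X) := ⟨1, hmem⟩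
  have hap := congrArg Subtype.val (congrFun (congrArg DFunLike.coe (hI.1 X)) v)
  by_contra hcontra
  have hbot : ¬(c ≤ ((X + ε.toNNReal:ℝ≥0):ℝ) ∧ ((X + ε.toNNReal:ℝ≥0):ℝ) < d) := by
    rw [NNReal.coe_add, hE, hXx]
    exact hcontra
  have hw0 : (Φ.app X) v = 0 :=
    Subtype.ext ((im_coe_zero hbot ((Φ.app X) v)).trans rfl)
  have hR : Subtype.val (((intervalModule a b).map
      (le_self_add.trans le_self_add : X ≤ X + ε.toNNReal + ε.toNNReal)) v) = (1:ℝ) := by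
    show (if a ≤ ((X:ℝ≥0):ℝ) ∧ ((X + ε.toNNReal + ε.toNNReal :ℝ≥0):ℝ) < b
        then (1:ℝ) else 0) * 1 = 1
    rw [if_pos ⟨by rw [hXx]; exact hax, by
      rw [NNReal.coe_add, NNReal.coe_add, hE, hXx]; linarith⟩]
    norm_num
  have key : Subtype.val ((Ψ.app (X + ε.toNNReal)) ((Φ.app X) v)) = (1:ℝ) :=
    hap.trans hR
  have hz := map_zero (Ψ.app (X + ε.toNNReal))
  rw [hw0] at key
  exact one_ne_zero (key.symm.trans (congrArg Subtype.val hz))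
theorem stmt10 (a b c d : ℝ) (ha : 0 ≤ a) (hab : a < b) (hc : 0 ≤ c) (hcd : c < d) :
    sInf {ε : ℝ | 0 < ε ∧ ∃ Φ Ψ, IsInterleaving (intervalModule a b) (intervalModule c d) ε.toNNReal Φ Ψ}
      = min (max |a - c| |b - d|) (max ((b - a) / 2) ((d - c) / 2)) := by
  set S := {ε : ℝ | 0 < ε ∧ ∃ Φ Ψ,
    IsInterleaving (intervalModule a b) (intervalModule c d) ε.toNNReal Φ Ψ} with hS
  set m1 := max |a - c| |b - d| with hm1
  set m2 := max ((b - a) / 2) ((d - c) / 2) with hm2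
  set δ := min m1 m2 with hδ
  have hm2pos : 0 < m2 := lt_of_lt_of_le (by linarith) (le_max_left _ _)
  have hδ0 : 0 ≤ δ := le_min (le_trans (abs_nonneg _) (le_max_left _ _)) hm2pos.le
  have hmem : ∀ ε : ℝ, 0 < ε → δ ≤ ε → ε ∈ S := by
    intro ε hε hδε
    refine ⟨hε, ?_⟩
    have hEc : ((ε.toNNReal : ℝ≥0):ℝ) = ε := Real.coe_toNNReal ε hε.le
    rcases min_le_iff.mp hδε with h1 | h2
    · have hac := abs_le.mp (le_trans (le_max_left _ _) h1)
      have hbd := abs_le.mp (le_trans (le_max_right _ _) h1)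
      exact ⟨_, _, interleave_scalar a b c d ε.toNNReal
        (by rw [hEc]; linarith [hac.1]) (by rw [hEc]; linarith [hbd.1])
        (by rw [hEc]; linarith [hac.2]) (by rw [hEc]; linarith [hbd.2])⟩
    · exact ⟨_, _, interleave_zero a b c d ε.toNNReal
        (by rw [hEc]; linarith [le_trans (le_max_left _ _) h2])
        (by rw [hEc]; linarith [le_trans (le_max_right _ _) h2])⟩
  have hlb : ∀ ε ∈ S, δ ≤ ε := by
    rintro ε ⟨hε, Φ, Ψ, hI⟩
    have hsymm : IsInterleaving (intervalModule c d) (intervalModule a b) ε.toNNReal Ψ Φ :=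
      ⟨hI.2, hI.1⟩
    have key1 : 2*ε < b - a → c ≤ a + ε ∧ b ≤ d + ε := by
      intro hba
      constructor
      · exact (lower_aux hε hI ha (le_refl a) (by linarith)).1
      · by_contra hbd
        push_neg at hbd
        have hx0 : (0:ℝ) ≤ max a (d - ε) := le_trans ha (le_max_left _ _)
        have h := lower_aux hε hI hx0 (le_max_left _ _) (by
          have : max a (d - ε) < b - 2*ε := max_lt (by linarith) (by linarith)
          linarith)
        have := le_max_right a (d - ε)
        linarith [h.2]
    have key2 : 2*ε < d - c → a ≤ c + ε ∧ d ≤ b + ε := by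
      intro hdc
      constructor
      · exact (lower_aux hε hsymm hc (le_refl c) (by linarith)).1
      · by_contra hbd
        push_neg at hbd
        have hx0 : (0:ℝ) ≤ max c (b - ε) := le_trans hc (le_max_left _ _)
        have h := lower_aux hε hsymm hx0 (le_max_left _ _) (by
          have : max c (b - ε) < d - 2*ε := max_lt (by linarith) (by linarith)
          linarith)
        have := le_max_right c (b - ε)
        linarith [h.2]
    by_cases h1 : 2*ε < b - a
    · by_cases h2 : 2*ε < d - c
      · have k1 := key1 h1; have k2 := key2 h2
        refine le_trans (min_le_left _ _) (max_le
          (abs_le.mpr ⟨by linarith [k1.1], by linarith [k2.1]⟩)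
          (abs_le.mpr ⟨by linarith [k2.2], by linarith [k1.2]⟩))
      · have k1 := key1 h1
        push_neg at h2
        refine le_trans (min_le_left _ _) (max_le
          (abs_le.mpr ⟨by linarith [k1.1], by linarith [k1.1, k1.2]⟩)
          (abs_le.mpr ⟨by linarith [k1.1], by linarith [k1.2]⟩))
    · by_cases h2 : 2*ε < d - c
      · have k2 := key2 h2
        push_neg at h1
        refine le_trans (min_le_left _ _) (max_le
          (abs_le.mpr ⟨by linarith [k2.1, k2.2], by linarith [k2.1]⟩)
          (abs_le.mpr ⟨by linarith [k2.2], by linarith [k2.1, k2.2]⟩))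
      · push_neg at h1 h2
        exact le_trans (min_le_right _ _) (max_le (by linarith) (by linarith))
  apply le_antisymm
  · refine le_of_forall_gt_imp_ge_of_dense fun η hη => ?_
    exact csInf_le ⟨0, fun t ht => ht.1.le⟩ (hmem η (lt_of_le_of_lt hδ0 hη) hη.le)
  · exact le_csInf ⟨δ + 1, hmem (δ + 1) (by linarith) (by linarith)⟩ hlb
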